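/- Let 0 < t < 1 and let Li denote Littlewood's inequality: if φ is analytic self-map of D with φ(0) = a, then for z ≠ a, the product of the moduli of all preimages (with multiplicity) satisfies Π_n |ζ_n| ≥ |φ_z(a)|, where φ_z(u) = (z-u)/(1-conj(z)u). Deduce: for any nonincreasing function ψ: (0,1] → [0,∞) extended by ψ = 0 at modulus 1, Σ_n ψ(|ζ_n|) ≥ ψ(Π_n |ζ_n|) fails in general, but Σ_n ψ(|ζ_n|) ≤ ψ(Π_n |ζ_n|) holds when ψ(r) = ω*(r) is of the form ∫_r^1 ω(s) log(s/r) s ds for a radial weight ω. In particular Σ_n ω*(ζ_n) ≤ ω*(Π_n |ζ_n|). -/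

import Mathlib

open MeasureTheory Set

lemma max_add_max_le_aux {a x y : ℝ} (ha : a ≤ 0) (hx : x ≤ 0) (hy : y ≤ 0) :
    max (a - x) 0 + max (a - y) 0 ≤ max (a - (x + y)) 0 := by
  rcases le_or_gt (a - x) 0 with h1 | h1 <;> rcases le_or_gt (a - y) 0 with h2 | h2
  · simp [max_eq_right h1, max_eq_right h2, le_max_right]
  · rw [max_eq_right h1, max_eq_left h2.le]
    calc 0 + (a - y) = a - y := by ring
    _ ≤ a - (x + y) := by linarith
    _ ≤ max (a - (x + y)) 0 := le_max_left _ _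
  · rw [max_eq_left h1.le, max_eq_right h2]
    calc (a - x) + 0 = a - x := by ring
    _ ≤ a - (x + y) := by linarith
    _ ≤ max (a - (x + y)) 0 := le_max_left _ _
  · rw [max_eq_left h1.le, max_eq_left h2.le]
    calc (a - x) + (a - y) ≤ a - (x + y) := by linarith
    _ ≤ max (a - (x + y)) 0 := le_max_left _ _

lemma sum_max_le_aux {ι : Type*} (s : Finset ι) (a : ℝ) (b : ι → ℝ) (ha : a ≤ 0)
    (hb : ∀ i ∈ s, b i ≤ 0) :
    ∑ i ∈ s, max (a - b i) 0 ≤ max (a - ∑ i ∈ s, b i) 0 := by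
  classical
  induction s using Finset.induction_on with
  | empty => simp
  | @insert j t hj ih =>
    rw [Finset.sum_insert hj, Finset.sum_insert hj]
    have ih' := ih (fun i hi => hb i (Finset.mem_insert_of_mem hi))
    calc max (a - b j) 0 + ∑ i ∈ t, max (a - b i) 0
        ≤ max (a - b j) 0 + max (a - ∑ i ∈ t, b i) 0 := by linarith
      _ ≤ max (a - (b j + ∑ i ∈ t, b i)) 0 :=
          max_add_max_le_aux ha (hb j (Finset.mem_insert_self j t))
            (Finset.sum_nonpos fun i hi => hb i (Finset.mem_insert_of_mem hi))

lemma integ_helper_aux (ω : ℝ → ℝ) (hω_int : IntegrableOn ω (Set.Ioo (0:ℝ) 1))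
    {a : ℝ} (ha : 0 < a) {c : ℝ → ℝ} (hc : Measurable c) {C : ℝ}
    (hC : ∀ t ∈ Set.Ioo a 1, |c t| ≤ C) :
    IntegrableOn (fun t => ω t * c t * t) (Set.Ioo a 1) := by
  have hsub : Set.Ioo a 1 ⊆ Set.Ioo 0 1 := Set.Ioo_subset_Ioo ha.le le_rfl
  have hω' : IntegrableOn ω (Set.Ioo a 1) := hω_int.mono_set hsub
  have hmeas : AEStronglyMeasurable (fun t => ω t * c t * t)
      (volume.restrict (Set.Ioo a 1)) :=
    (hω'.aestronglyMeasurable.mul hc.aestronglyMeasurable).mul aestronglyMeasurable_id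
  refine Integrable.mono' ((hω'.abs).mul_const C) hmeas ?_
  filter_upwards [ae_restrict_mem measurableSet_Ioo] with t ht
  have h0t : 0 < t := lt_trans ha ht.1
  have ht1 : |t| ≤ 1 := by rw [abs_of_pos h0t]; exact ht.2.le
  have hct := hC t ht
  have h0C : 0 ≤ C := le_trans (abs_nonneg _) hct
  have : ‖ω t * c t * t‖ = |ω t| * |c t| * |t| := by
    simp [Real.norm_eq_abs, abs_mul]
  rw [this]
  calc |ω t| * |c t| * |t| ≤ |ω t| * C * 1 := by
        apply mul_le_mul (mul_le_mul_of_nonneg_left hct (abs_nonneg _)) ht1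
          (abs_nonneg _) (by positivity)
    _ = |ω t| * C := by ring

/-- Superadditivity of `ω*`: for any finite collection `r_i ∈ (0,1]`,
`Σ_i ω*(r_i) ≤ ω*(Π_i r_i)`. In particular `Σ_n ω*(ζ_n) ≤ ω*(Π_n |ζ_n|)` for the
preimages in Littlewood's inequality. -/
theorem stmt_16 (ω : ℝ → ℝ)
    (hω_nonneg : ∀ r ∈ Set.Ico (0:ℝ) 1, 0 ≤ ω r)
    (hω_int : IntegrableOn ω (Set.Ioo (0:ℝ) 1))
    {ι : Type*} (s : Finset ι) (r : ι → ℝ) (hr : ∀ i ∈ s, r i ∈ Set.Ioc (0:ℝ) 1) :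
    ∑ i ∈ s, (∫ t in Set.Ioo (r i) 1, ω t * Real.log (t / r i) * t) ≤
      ∫ t in Set.Ioo (∏ i ∈ s, r i) 1, ω t * Real.log (t / ∏ i ∈ s, r i) * t := by
  classical
  set p : ℝ := ∏ i ∈ s, r i with hp
  have hp0 : 0 < p := Finset.prod_pos fun i hi => (hr i hi).1
  have hp1 : p ≤ 1 := Finset.prod_le_one (fun i hi => (hr i hi).1.le)
    (fun i hi => (hr i hi).2)
  have hpr : ∀ i ∈ s, p ≤ r i := by
    intro i hi
    rw [hp, ← Finset.mul_prod_erase s r hi]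
    nth_rewrite 2 [← mul_one (r i)]
    apply mul_le_mul_of_nonneg_left _ (hr i hi).1.le
    exact Finset.prod_le_one (fun j hj => (hr j (Finset.mem_of_mem_erase hj)).1.le)
      (fun j hj => (hr j (Finset.mem_of_mem_erase hj)).2)
  -- the modified integrands
  set g : ι → ℝ → ℝ := fun i t => ω t * max (Real.log (t / r i)) 0 * t with hg
  have hCbound : ∀ i ∈ s, ∀ t ∈ Set.Ioo p 1, |max (Real.log (t / r i)) 0| ≤ Real.log p⁻¹ := by
    intro i hi t ht
    have h0t : 0 < t := lt_trans hp0 ht.1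
    have hlogp : 0 ≤ Real.log p⁻¹ := Real.log_nonneg (one_le_inv_iff₀.2 ⟨hp0, hp1⟩)
    rw [abs_of_nonneg (le_max_right _ _)]
    apply max_le _ hlogp
    rw [Real.log_div (ne_of_gt h0t) (ne_of_gt (hr i hi).1), Real.log_inv]
    have h1 : Real.log t ≤ 0 := Real.log_nonpos h0t.le ht.2.le
    have h2 : Real.log p ≤ Real.log (r i) :=
      Real.log_le_log hp0 (hpr i hi)
    linarith
  have hcmeas : ∀ i, Measurable fun t => max (Real.log (t / r i)) 0 :=
    fun i => (Real.measurable_log.comp (measurable_id.div_const (r i))).max measurable_const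
  have hgint : ∀ i ∈ s, IntegrableOn (g i) (Set.Ioo p 1) := by
    intro i hi
    exact integ_helper_aux ω hω_int hp0 (hcmeas i) (hCbound i hi)
  -- RHS integrand integrable
  have hrhsint : IntegrableOn (fun t => ω t * Real.log (t / p) * t) (Set.Ioo p 1) := by
    apply integ_helper_aux ω hω_int hp0
      (c := fun t => Real.log (t / p)) ((measurable_id.div_const p).log) (C := Real.log p⁻¹)
    intro t ht
    have h0t : 0 < t := lt_trans hp0 ht.1
    have h1 : 0 < t / p := div_pos h0t hp0
    have h2 : (1:ℝ) ≤ t / p := (one_le_div hp0).2 ht.1.le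
    rw [abs_of_nonneg (Real.log_nonneg h2)]
    rw [Real.log_div (ne_of_gt h0t) (ne_of_gt hp0), Real.log_inv]
    have h3 : Real.log t ≤ 0 := Real.log_nonpos h0t.le ht.2.le
    linarith
  -- Step 1: each LHS term equals the integral of g i over Ioo p 1
  have key : ∀ i ∈ s, (∫ t in Set.Ioo (r i) 1, ω t * Real.log (t / r i) * t) =
      ∫ t in Set.Ioo p 1, g i t := by
    intro i hi
    rcases eq_or_lt_of_le (hr i hi).2 with heq | hlt
    · -- r i = 1 : both sides are 0
      have hz : ∀ t ∈ Set.Ioo p 1, g i t = 0 := by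
        intro t ht
        have h0t : 0 < t := lt_trans hp0 ht.1
        have : Real.log (t / r i) ≤ 0 := by
          rw [heq, div_one]
          exact Real.log_nonpos h0t.le ht.2.le
        simp [hg, max_eq_right this]
      have h0 : (∫ t in Set.Ioo p 1, g i t) = ∫ _t in Set.Ioo p 1, (0:ℝ) :=
        setIntegral_congr_fun measurableSet_Ioo hz
      rw [heq, Set.Ioo_self, h0]
      simp
    · -- r i < 1 : split the domain
      have hdisj : Disjoint (Set.Ioc p (r i)) (Set.Ioo (r i) 1) := by
        rw [Set.disjoint_left]
        rintro x ⟨_, h2⟩ ⟨h3, _⟩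
        exact absurd h3 (not_lt.2 h2)
      have hunion : Set.Ioc p (r i) ∪ Set.Ioo (r i) 1 = Set.Ioo p 1 :=
        Set.Ioc_union_Ioo_eq_Ioo (hpr i hi) hlt
      have hsub1 : Set.Ioc p (r i) ⊆ Set.Ioo p 1 := by
        rw [← hunion]; exact Set.subset_union_left
      have hsub2 : Set.Ioo (r i) 1 ⊆ Set.Ioo p 1 := by
        rw [← hunion]; exact Set.subset_union_right
      have hint1 : IntegrableOn (g i) (Set.Ioc p (r i)) := (hgint i hi).mono_set hsub1
      have hint2 : IntegrableOn (g i) (Set.Ioo (r i) 1) := (hgint i hi).mono_set hsub2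
      have hz : ∀ t ∈ Set.Ioc p (r i), g i t = 0 := by
        intro t ht
        have h0t : 0 < t := lt_trans hp0 ht.1
        have : Real.log (t / r i) ≤ 0 :=
          Real.log_nonpos (div_pos h0t (hr i hi).1).le ((div_le_one (hr i hi).1).2 ht.2)
        simp [hg, max_eq_right this]
      have heqon : ∀ t ∈ Set.Ioo (r i) 1, ω t * Real.log (t / r i) * t = g i t := by
        intro t ht
        have : 0 ≤ Real.log (t / r i) :=
          Real.log_nonneg ((one_le_div (hr i hi).1).2 ht.1.le)
        simp [hg, max_eq_left this]
      calc (∫ t in Set.Ioo (r i) 1, ω t * Real.log (t / r i) * t)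
          = ∫ t in Set.Ioo (r i) 1, g i t := setIntegral_congr_fun measurableSet_Ioo heqon
        _ = 0 + ∫ t in Set.Ioo (r i) 1, g i t := by ring
        _ = (∫ t in Set.Ioc p (r i), g i t) + ∫ t in Set.Ioo (r i) 1, g i t := by
            rw [setIntegral_congr_fun measurableSet_Ioc hz]; simp
        _ = ∫ t in Set.Ioc p (r i) ∪ Set.Ioo (r i) 1, g i t :=
            (setIntegral_union hdisj measurableSet_Ioo hint1 hint2).symm
        _ = ∫ t in Set.Ioo p 1, g i t := by rw [hunion]
  -- Step 2 & 3
  calc ∑ i ∈ s, (∫ t in Set.Ioo (r i) 1, ω t * Real.log (t / r i) * t)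
      = ∑ i ∈ s, ∫ t in Set.Ioo p 1, g i t := Finset.sum_congr rfl key
    _ = ∫ t in Set.Ioo p 1, ∑ i ∈ s, g i t := (integral_finset_sum s hgint).symm
    _ ≤ ∫ t in Set.Ioo p 1, ω t * Real.log (t / p) * t := by
        apply setIntegral_mono_on (integrable_finset_sum s hgint) hrhsint
          measurableSet_Ioo
        intro t ht
        have h0t : 0 < t := lt_trans hp0 ht.1
        have hωt : 0 ≤ ω t := hω_nonneg t ⟨h0t.le, ht.2⟩
        have hsum : ∑ i ∈ s, max (Real.log (t / r i)) 0 ≤ Real.log (t / p) := by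
          have hlogs : ∀ i ∈ s, Real.log (t / r i)
              = Real.log t - Real.log (r i) := fun i hi =>
            Real.log_div (ne_of_gt h0t) (ne_of_gt (hr i hi).1)
          have hlogp : Real.log p = ∑ i ∈ s, Real.log (r i) :=
            Real.log_prod (s := s) (f := r) fun i hi => ne_of_gt (hr i hi).1
          have h1 : Real.log t ≤ 0 := Real.log_nonpos h0t.le ht.2.le
          have h2 : Real.log p < Real.log t := Real.log_lt_log hp0 ht.1
          calc ∑ i ∈ s, max (Real.log (t / r i)) 0
              = ∑ i ∈ s, max (Real.log t - Real.log (r i)) 0 := by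
                apply Finset.sum_congr rfl; intro i hi; rw [hlogs i hi]
            _ ≤ max (Real.log t - ∑ i ∈ s, Real.log (r i)) 0 :=
                sum_max_le_aux s (Real.log t) _ h1
                  (fun i hi => Real.log_nonpos (hr i hi).1.le (hr i hi).2)
            _ = Real.log t - Real.log p := by
                rw [hlogp] at h2 ⊢
                exact max_eq_left (by linarith)
            _ = Real.log (t / p) := (Real.log_div (ne_of_gt h0t) (ne_of_gt hp0)).symm
        calc ∑ i ∈ s, g i t = (ω t * t) * ∑ i ∈ s, max (Real.log (t / r i)) 0 := by
              rw [Finset.mul_sum]; apply Finset.sum_congr rfl; intro i hi; simp [hg]; ring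
          _ ≤ (ω t * t) * Real.log (t / p) := by
              apply mul_le_mul_of_nonneg_left hsum (by positivity)
          _ = ω t * Real.log (t / p) * t := by ring
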